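/- Suppose φ₁ is a factor over 𝐗₁ = 𝐘₁ ⊎ 𝐖₁ and φ₂ is a factor over 𝐗₂ = 𝐘₂ ⊎ 𝐖₂, with 𝐖₁ ∩ 𝐗₂ = ∅ and 𝐖₂ ∩ 𝐗₁ = ∅. Then (∑_{𝐖₁} φ₁) ⊙ (∑_{𝐖₂} φ₂) = ∑_{𝐖₁ ∪ 𝐖₂} (φ₁ ⊙ φ₂), both being factors over 𝐘₁ ∪ 𝐘₂. -/
import Mathlib


open Finset

/-- A factor over a set `S` of variables: a function on total instantiations
that only depends on the values of the variables in `S`. -/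
def FDependsOn {V : Type*} {Val : V → Type*}
    (φ : (∀ v, Val v) → NNReal) (S : Finset V) : Prop :=
  ∀ a b : ∀ v, Val v, (∀ v ∈ S, a v = b v) → φ a = φ b

/-- Summing out the variables in `Z` from a factor. -/
def fsumOut {V : Type*} [DecidableEq V] {Val : V → Type*} [∀ v, Fintype (Val v)]
    (Z : Finset V) (φ : (∀ v, Val v) → NNReal) : (∀ v, Val v) → NNReal :=
  fun a => ∑ z : (∀ v : Z, Val v), φ (fun v => if h : v ∈ Z then z ⟨v, h⟩ else a v)


/-- Key compositionality identity:
`(∑_{W₁} φ₁) ⊙ (∑_{W₂} φ₂) = ∑_{W₁ ∪ W₂} (φ₁ ⊙ φ₂)`. -/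
theorem sumOut_fprod {V : Type*} [DecidableEq V] {Val : V → Type*}
    [∀ v, Fintype (Val v)] (Y₁ W₁ Y₂ W₂ : Finset V)
    (φ₁ φ₂ : (∀ v, Val v) → NNReal)
    (h₁ : FDependsOn φ₁ (Y₁ ∪ W₁)) (h₂ : FDependsOn φ₂ (Y₂ ∪ W₂))
    (hd₁ : Disjoint Y₁ W₁) (hd₂ : Disjoint Y₂ W₂)
    (hW₁ : Disjoint W₁ (Y₂ ∪ W₂)) (hW₂ : Disjoint W₂ (Y₁ ∪ W₁)) :
    (fun a => fsumOut W₁ φ₁ a * fsumOut W₂ φ₂ a)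
      = fsumOut (W₁ ∪ W₂) (fun a => φ₁ a * φ₂ a) := by
  have hdW : Disjoint W₁ W₂ := hW₁.mono_right Finset.subset_union_right
  funext a
  let e : ((∀ v : ↥(W₁ ∪ W₂), Val v) ≃ (∀ v : ↥W₁, Val v) × (∀ v : ↥W₂, Val v)) :=
    { toFun := fun z => (fun v => z ⟨v, Finset.mem_union_left _ v.2⟩,
        fun v => z ⟨v, Finset.mem_union_right _ v.2⟩)
      invFun := fun p v => if h : (v : V) ∈ W₁ then p.1 ⟨v, h⟩ else
        p.2 ⟨v, (Finset.mem_union.mp v.2).resolve_left h⟩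
      left_inv := by
        intro z; funext v
        by_cases h : (v : V) ∈ W₁ <;> simp [h]
      right_inv := by
        intro p
        refine Prod.ext (funext fun v => ?_) (funext fun v => ?_)
        · simp [v.2]
        · have hv1 : (v : V) ∉ W₁ := fun h => Finset.disjoint_left.mp hdW h v.2
          simp [hv1] }
  show _ = ∑ z : (∀ v : ↥(W₁ ∪ W₂), Val v), _
  rw [← e.symm.sum_comp]
  rw [Fintype.sum_prod_type]
  unfold fsumOut
  rw [Finset.sum_mul_sum]
  refine Finset.sum_congr rfl fun z₁ _ => Finset.sum_congr rfl fun z₂ _ => ?_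
  have key : ∀ v : V,
      (if h : v ∈ W₁ ∪ W₂ then e.symm (z₁, z₂) ⟨v, h⟩ else a v)
        = if h : v ∈ W₁ then z₁ ⟨v, h⟩ else if h : v ∈ W₂ then z₂ ⟨v, h⟩ else a v := by
    intro v
    by_cases h1 : v ∈ W₁
    · simp [e, h1, Finset.mem_union_left _ h1]
    · by_cases h2 : v ∈ W₂
      · simp [e, h1, h2, Finset.mem_union_right _ h2]
      · have : v ∉ W₁ ∪ W₂ := by simp [h1, h2]
        simp [h1, h2, this]
  congr 1
  · refine h₁ _ _ fun v hv => ?_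
    rw [key v]
    rcases Finset.mem_union.mp hv with hy | hw
    · have hv1 : v ∉ W₁ := fun h => Finset.disjoint_left.mp hd₁ hy h
      have hv2 : v ∉ W₂ := fun h => Finset.disjoint_left.mp hW₂ h (Finset.mem_union_left _ hy)
      simp [hv1, hv2]
    · simp [hw]
  · refine h₂ _ _ fun v hv => ?_
    rw [key v]
    rcases Finset.mem_union.mp hv with hy | hw
    · have hv2 : v ∉ W₂ := fun h => Finset.disjoint_left.mp hd₂ hy h
      have hv1 : v ∉ W₁ := fun h => Finset.disjoint_left.mp hW₁ h (Finset.mem_union_left _ hy)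
      simp [hv1, hv2]
    · have hv1 : v ∉ W₁ := fun h => Finset.disjoint_left.mp hdW h hw
      simp [hv1, hw]
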